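/- arXiv:1301.5137 — 3 statements merged into one kernel-verified Lean document; each statement's English description precedes it below -/
import Mathlib

section
/- The function T(γ) = arcsinh(√((γ²−1)/2)) + arcsin((1/γ)·√((γ²−1)/2)) is strictly increasing on (1, ∞), with T(γ) → 0 as γ → 1⁺. -/
open Real Set

private lemma arg_sq {γ : ℝ} (h : 1 ≤ γ) :
    ((1/γ) * Real.sqrt ((γ^2 - 1)/2))^2 = (γ^2 - 1)/(2*γ^2) := by
  have h1 : 0 ≤ (γ^2 - 1)/2 := by nlinarith
  rw [mul_pow, Real.sq_sqrt h1, div_pow, one_pow]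
  ring

private lemma arg_nonneg {γ : ℝ} (h : 1 ≤ γ) :
    0 ≤ (1/γ) * Real.sqrt ((γ^2 - 1)/2) := by
  have : (0:ℝ) < γ := by linarith
  positivity

private lemma arg_le_one {γ : ℝ} (h : 1 ≤ γ) :
    (1/γ) * Real.sqrt ((γ^2 - 1)/2) ≤ 1 := by
  have h0 := arg_nonneg h
  have hs := arg_sq h
  have hγ : (0:ℝ) < γ^2 := by nlinarith
  have hle : ((1/γ) * Real.sqrt ((γ^2 - 1)/2))^2 ≤ 1 := by
    rw [hs, div_le_one (by linarith)]; nlinarith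
  nlinarith [sq_nonneg ((1/γ) * Real.sqrt ((γ^2 - 1)/2) - 1)]

theorem min_time_strict_mono :
    StrictMonoOn
      (fun γ : ℝ =>
        Real.arsinh (Real.sqrt ((γ^2 - 1) / 2)) +
          Real.arcsin ((1 / γ) * Real.sqrt ((γ^2 - 1) / 2)))
      (Set.Ioi 1) ∧
    Filter.Tendsto
      (fun γ : ℝ =>
        Real.arsinh (Real.sqrt ((γ^2 - 1) / 2)) +
          Real.arcsin ((1 / γ) * Real.sqrt ((γ^2 - 1) / 2)))
      (nhdsWithin 1 (Set.Ioi 1)) (nhds 0) := by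
  constructor
  · intro a ha b hb hab
    simp only [Set.mem_Ioi] at ha hb
    have ha1 : (1:ℝ) ≤ a := ha.le
    have hb1 : (1:ℝ) ≤ b := hb.le
    have hfirst : Real.arsinh (Real.sqrt ((a^2 - 1)/2)) <
        Real.arsinh (Real.sqrt ((b^2 - 1)/2)) := by
      apply Real.arsinh_lt_arsinh.mpr
      apply Real.sqrt_lt_sqrt (by nlinarith)
      nlinarith
    have hargs : (1/a) * Real.sqrt ((a^2 - 1)/2) < (1/b) * Real.sqrt ((b^2 - 1)/2) := by
      have hr := arg_nonneg hb1
      have hsq : ((1/a) * Real.sqrt ((a^2 - 1)/2))^2 <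
          ((1/b) * Real.sqrt ((b^2 - 1)/2))^2 := by
        rw [arg_sq ha1, arg_sq hb1,
          div_lt_div_iff₀ (by nlinarith) (by nlinarith)]
        nlinarith
      exact lt_of_pow_lt_pow_left₀ 2 hr hsq
    have hsecond : Real.arcsin ((1/a) * Real.sqrt ((a^2 - 1)/2)) <
        Real.arcsin ((1/b) * Real.sqrt ((b^2 - 1)/2)) :=
      Real.strictMonoOn_arcsin
        ⟨by linarith [arg_nonneg ha1], arg_le_one ha1⟩
        ⟨by linarith [arg_nonneg hb1], arg_le_one hb1⟩ hargs
    exact add_lt_add hfirst hsecond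
  · have hc : ContinuousAt
        (fun γ : ℝ =>
          Real.arsinh (Real.sqrt ((γ^2 - 1) / 2)) +
            Real.arcsin ((1 / γ) * Real.sqrt ((γ^2 - 1) / 2))) 1 := by
      have hγ : ContinuousAt (fun γ : ℝ => Real.sqrt ((γ^2 - 1)/2)) 1 :=
        Real.continuous_sqrt.continuousAt.comp (by fun_prop)
      have hinv : ContinuousAt (fun γ : ℝ => 1/γ) 1 :=
        ContinuousAt.div continuousAt_const continuousAt_id (by norm_num)
      exact (Real.continuous_arsinh.continuousAt.comp hγ).add
        (Real.continuous_arcsin.continuousAt.comp (hinv.mul hγ))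
    have := hc.tendsto.mono_left (nhdsWithin_le_nhds (s := Set.Ioi 1))
    have h0 : Real.arsinh (Real.sqrt (((1:ℝ)^2 - 1) / 2)) +
        Real.arcsin (1 / (1:ℝ) * Real.sqrt (((1:ℝ)^2 - 1) / 2)) = 0 := by norm_num
    rwa [h0] at this
end

section
/- If ψₙ(x,t) = exp(−(i/ℏ)∫₀ᵗ Eₙ(s)ds)·exp(i m ȧ(t) x²/(2ℏ a(t)))·√(2/a(t))·sin(nπx/a(t)) with Eₙ(t) = n²π²ℏ²/(2m a(t)²), and a satisfies ä(t) = −k(t)a(t)/m, then ψₙ satisfies iℏ ∂ψₙ/∂t = [−(ℏ²/2m)∂²/∂x² + ½k(t)x²]ψₙ for 0 < x < a(t). -/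
open Complex in
private lemma aux_deriv_x1 (K R c b : ℂ) (y : ℝ) :
    HasDerivAt (fun x' : ℝ => K * Complex.exp (c * (x':ℂ)^2) * R * Complex.sin (b * (x':ℂ)))
      (K * Complex.exp (c * (y:ℂ)^2) * R *
        (2*c*(y:ℂ)*Complex.sin (b*(y:ℂ)) + b*Complex.cos (b*(y:ℂ)))) y := by
  have hid : HasDerivAt (fun x' : ℝ => (x' : ℂ)) 1 y := by
    simpa using (hasDerivAt_id y).ofReal_comp
  have hp : HasDerivAt (fun x' : ℝ => ((x':ℂ))^2) (2*(y:ℂ)) y := by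
    simpa [pow_two, two_mul, Pi.mul_def] using hid.mul hid
  have hg : HasDerivAt (fun x' : ℝ => c * ((x':ℂ))^2) (c * (2*(y:ℂ))) y := hp.const_mul c
  have hb : HasDerivAt (fun x' : ℝ => b * ((x':ℂ))) (b * 1) y := hid.const_mul b
  have hsin : HasDerivAt (fun x' : ℝ => Complex.sin (b * (x':ℂ))) ((b*1) * Complex.cos (b*(y:ℂ))) y := by
    simpa [smul_eq_mul, Function.comp_def] using (Complex.hasDerivAt_sin (b*(y:ℂ))).scomp y hb
  have h := ((hg.cexp.const_mul K).mul_const R).mul hsin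
  exact h.congr_deriv (by ring)

open Complex in
private lemma aux_deriv_x2 (K R c b : ℂ) (x : ℝ) :
    HasDerivAt (fun y : ℝ => K * Complex.exp (c * (y:ℂ)^2) * R *
        (2*c*(y:ℂ)*Complex.sin (b*(y:ℂ)) + b*Complex.cos (b*(y:ℂ))))
      (K * Complex.exp (c * (x:ℂ)^2) * R *
        ((2*c + 4*c^2*(x:ℂ)^2 - b^2)*Complex.sin (b*(x:ℂ)) + 4*b*c*(x:ℂ)*Complex.cos (b*(x:ℂ)))) x := by
  have hid : HasDerivAt (fun x' : ℝ => (x' : ℂ)) 1 x := by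
    simpa using (hasDerivAt_id x).ofReal_comp
  have hp : HasDerivAt (fun x' : ℝ => ((x':ℂ))^2) (2*(x:ℂ)) x := by
    simpa [pow_two, two_mul, Pi.mul_def] using hid.mul hid
  have hg : HasDerivAt (fun x' : ℝ => c * ((x':ℂ))^2) (c * (2*(x:ℂ))) x := hp.const_mul c
  have hb : HasDerivAt (fun x' : ℝ => b * ((x':ℂ))) (b * 1) x := hid.const_mul b
  have hsin : HasDerivAt (fun x' : ℝ => Complex.sin (b * (x':ℂ))) ((b*1) * Complex.cos (b*(x:ℂ))) x := by
    simpa [smul_eq_mul, Function.comp_def] using (Complex.hasDerivAt_sin (b*(x:ℂ))).scomp x hb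
  have hcos : HasDerivAt (fun x' : ℝ => Complex.cos (b * (x':ℂ))) ((b*1) * -Complex.sin (b*(x:ℂ))) x := by
    simpa [smul_eq_mul, Function.comp_def] using (Complex.hasDerivAt_cos (b*(x:ℂ))).scomp x hb
  have base := (hg.cexp.const_mul K).mul_const R
  have hS := ((hid.const_mul (2*c)).mul hsin).add (hcos.const_mul b)
  have h := base.mul hS
  exact h.congr_deriv (by simp only [Pi.mul_apply, Pi.add_apply]; ring)

open Complex in
private lemma aux_deriv_t (c1 : ℂ) (J u w : ℝ → ℂ) (r : ℝ → ℝ) (t : ℝ)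
    (J' u' w' : ℂ) (r' : ℝ)
    (hJ : HasDerivAt J J' t) (hu : HasDerivAt u u' t)
    (hw : HasDerivAt w w' t) (hr : HasDerivAt r r' t) :
    HasDerivAt (fun t' => Complex.exp (c1 * J t') * Complex.exp (u t') *
        ((r t' : ℝ) : ℂ) * Complex.sin (w t'))
      (Complex.exp (c1 * J t) * Complex.exp (u t) *
        ((c1*J' + u') * ((r t : ℝ) : ℂ) * Complex.sin (w t)
          + (r' : ℂ) * Complex.sin (w t)
          + ((r t : ℝ) : ℂ) * w' * Complex.cos (w t))) t := by
  have h1 : HasDerivAt (fun t' => Complex.exp (c1 * J t')) (Complex.exp (c1 * J t) * (c1 * J')) t :=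
    (hJ.const_mul c1).cexp
  have h2 : HasDerivAt (fun t' => Complex.exp (u t')) (Complex.exp (u t) * u') t := hu.cexp
  have h3 : HasDerivAt (fun t' => ((r t' : ℝ) : ℂ)) ((r' : ℝ) : ℂ) t := hr.ofReal_comp
  have h4 : HasDerivAt (fun t' => Complex.sin (w t')) (w' * Complex.cos (w t)) t := by
    simpa [smul_eq_mul, Function.comp_def] using (Complex.hasDerivAt_sin (w t)).scomp t hw
  have h := ((h1.mul h2).mul h3).mul h4
  exact h.congr_deriv (by simp only [Pi.mul_apply, Pi.add_apply]; ring)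

set_option maxHeartbeats 1000000 in
open Complex in
theorem exact_mode_solution (m ℏ : ℝ) (hm : 0 < m) (hℏ : 0 < ℏ)
    (n : ℕ) (hn : 0 < n)
    (a : ℝ → ℝ) (hpos : ∀ t, 0 < a t) (ha : ContDiff ℝ 2 a)
    (k : ℝ → ℝ) (hk : ∀ t, deriv (deriv a) t = -(k t) * a t / m)
    (E : ℝ → ℝ)
    (hE : ∀ t, E t = (n : ℝ)^2 * Real.pi^2 * ℏ^2 / (2 * m * (a t)^2))
    (ψ : ℝ → ℝ → ℂ)
    (hψ : ∀ t x, ψ t x =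
      Complex.exp (-(Complex.I / ℏ) * (∫ s in (0:ℝ)..t, (E s : ℂ))) *
      Complex.exp (Complex.I * m * (deriv a t) * x^2 / (2 * ℏ * a t)) *
      (Real.sqrt (2 / a t) : ℂ) *
      Complex.sin ((n : ℂ) * Real.pi * x / a t)) :
    ∀ t x : ℝ, 0 < x → x < a t →
      Complex.I * (ℏ : ℂ) * deriv (fun t' => ψ t' x) t =
        -((ℏ : ℂ)^2 / (2 * m)) * deriv (deriv (fun x' : ℝ => ψ t x')) x +
          (1 / 2) * (k t : ℂ) * (x : ℂ)^2 * ψ t x := by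
  intro t x hx hxa
  have hA : (0:ℝ) < a t := hpos t
  have hA0 : ((a t : ℝ) : ℂ) ≠ 0 := Complex.ofReal_ne_zero.mpr (ne_of_gt hA)
  have hℏ0 : ((ℏ : ℝ) : ℂ) ≠ 0 := Complex.ofReal_ne_zero.mpr (ne_of_gt hℏ)
  have hm0 : ((m : ℝ) : ℂ) ≠ 0 := Complex.ofReal_ne_zero.mpr (ne_of_gt hm)
  have hda : Differentiable ℝ a := ha.differentiable (by norm_num)
  have hdda : Differentiable ℝ (deriv a) := by
    have h : ContDiff ℝ ((1:WithTop ℕ∞)+1) a := by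
      have h2 : ((1:WithTop ℕ∞)+1) = 2 := by rfl
      rw [h2]; exact ha
    exact ((contDiff_succ_iff_deriv.mp h).2.2).differentiable (by norm_num)
  ------------------------------------------------------------------
  -- x-derivatives
  ------------------------------------------------------------------
  have hFx : (fun x' : ℝ => ψ t x') = fun x' : ℝ =>
      Complex.exp (-(Complex.I / ℏ) * (∫ s in (0:ℝ)..t, (E s : ℂ))) *
      Complex.exp ((Complex.I * m * (deriv a t) / (2 * ℏ * a t)) * (x':ℂ)^2) *
      (Real.sqrt (2 / a t) : ℂ) *
      Complex.sin (((n : ℂ) * Real.pi / a t) * (x':ℂ)) := by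
    funext x'
    rw [hψ t x']
    have e1 : Complex.I * m * (deriv a t) * (x':ℂ)^2 / (2 * ℏ * a t)
        = (Complex.I * m * (deriv a t) / (2 * ℏ * a t)) * (x':ℂ)^2 := by ring
    have e2 : ((n : ℂ) * Real.pi * (x':ℂ) / a t) = ((n : ℂ) * Real.pi / a t) * (x':ℂ) := by ring
    rw [e1, e2]
  have hd1 : deriv (fun x' : ℝ => ψ t x') = fun y : ℝ =>
      Complex.exp (-(Complex.I / ℏ) * (∫ s in (0:ℝ)..t, (E s : ℂ))) *
      Complex.exp ((Complex.I * m * (deriv a t) / (2 * ℏ * a t)) * (y:ℂ)^2) *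
      (Real.sqrt (2 / a t) : ℂ) *
      (2*(Complex.I * m * (deriv a t) / (2 * ℏ * a t))*(y:ℂ) *
          Complex.sin (((n : ℂ) * Real.pi / a t)*(y:ℂ))
        + ((n : ℂ) * Real.pi / a t) * Complex.cos (((n : ℂ) * Real.pi / a t)*(y:ℂ))) := by
    funext y
    rw [hFx]
    exact (aux_deriv_x1 _ _ _ _ y).deriv
  have hd2 : deriv (deriv (fun x' : ℝ => ψ t x')) x =
      Complex.exp (-(Complex.I / ℏ) * (∫ s in (0:ℝ)..t, (E s : ℂ))) *
      Complex.exp ((Complex.I * m * (deriv a t) / (2 * ℏ * a t)) * (x:ℂ)^2) *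
      (Real.sqrt (2 / a t) : ℂ) *
      ((2*(Complex.I * m * (deriv a t) / (2 * ℏ * a t))
          + 4*(Complex.I * m * (deriv a t) / (2 * ℏ * a t))^2*(x:ℂ)^2
          - ((n : ℂ) * Real.pi / a t)^2) * Complex.sin (((n : ℂ) * Real.pi / a t)*(x:ℂ))
        + 4*((n : ℂ) * Real.pi / a t)*(Complex.I * m * (deriv a t) / (2 * ℏ * a t))*(x:ℂ) *
          Complex.cos (((n : ℂ) * Real.pi / a t)*(x:ℂ))) := by
    rw [hd1]
    exact (aux_deriv_x2 _ _ _ _ x).deriv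
  ------------------------------------------------------------------
  -- t-derivative
  ------------------------------------------------------------------
  have hEc : Continuous fun s : ℝ => ((E s : ℝ) : ℂ) := by
    have hEfun : E = fun s => (n:ℝ)^2 * Real.pi^2 * ℏ^2 / (2 * m * (a s)^2) := funext hE
    rw [hEfun]
    exact Complex.continuous_ofReal.comp (continuous_const.div
      (continuous_const.mul ((ha.continuous).pow 2))
      (fun s => ne_of_gt (mul_pos (mul_pos two_pos hm) (pow_pos (hpos s) 2))))
  have hJ : HasDerivAt (fun t' : ℝ => ∫ s in (0:ℝ)..t', ((E s : ℝ) : ℂ)) ((E t : ℝ) : ℂ) t :=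
    (hEc.integral_hasStrictDerivAt 0 t).hasDerivAt
  have Ha : HasDerivAt a (deriv a t) t := (hda t).hasDerivAt
  have Hda' : HasDerivAt (deriv a) (deriv (deriv a) t) t := (hdda t).hasDerivAt
  have hnum : HasDerivAt (fun t' : ℝ => Complex.I * m * (deriv a t') * (x:ℂ)^2)
      (Complex.I * m * (deriv (deriv a) t) * (x:ℂ)^2) t :=
    (Hda'.ofReal_comp.const_mul (Complex.I * (m:ℂ))).mul_const ((x:ℂ)^2)
  have hden : HasDerivAt (fun t' : ℝ => 2 * (ℏ:ℂ) * ((a t' : ℝ) : ℂ))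
      (2 * (ℏ:ℂ) * ((deriv a t : ℝ) : ℂ)) t :=
    Ha.ofReal_comp.const_mul (2 * (ℏ:ℂ))
  have hden0 : 2 * (ℏ:ℂ) * ((a t : ℝ) : ℂ) ≠ 0 :=
    mul_ne_zero (mul_ne_zero two_ne_zero hℏ0) hA0
  have hu := hnum.div hden hden0
  have hw : HasDerivAt (fun t' : ℝ => (n : ℂ) * Real.pi * x / ((a t' : ℝ) : ℂ))
      ((0 * ((a t : ℝ) : ℂ) - ((n:ℂ) * Real.pi * x) * ((deriv a t : ℝ) : ℂ)) / ((a t : ℝ) : ℂ)^2) t :=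
    (hasDerivAt_const t ((n:ℂ) * (Real.pi : ℂ) * (x:ℂ))).div Ha.ofReal_comp hA0
  have hq2 : HasDerivAt (fun t' : ℝ => 2 / a t') ((0 * a t - 2 * deriv a t) / (a t)^2) t :=
    (hasDerivAt_const t (2:ℝ)).div Ha (ne_of_gt hA)
  have hr : HasDerivAt (fun t' : ℝ => Real.sqrt (2 / a t'))
      (-(deriv a t) / (2 * a t) * Real.sqrt (2 / a t)) t := by
    have h := hq2.sqrt (ne_of_gt (div_pos two_pos hA))
    convert h using 1
    have hs2 : Real.sqrt (2 / a t) * Real.sqrt (2 / a t) = 2 / a t :=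
      Real.mul_self_sqrt (le_of_lt (div_pos two_pos hA))
    have hsne : Real.sqrt (2 / a t) ≠ 0 := ne_of_gt (Real.sqrt_pos.mpr (div_pos two_pos hA))
    have hane : a t ≠ 0 := ne_of_gt hA
    field_simp
    ring_nf
    rw [Real.sq_sqrt (by positivity)]
    field_simp
  have hdT : deriv (fun t' : ℝ => ψ t' x) t =
      Complex.exp (-(Complex.I / ℏ) * (∫ s in (0:ℝ)..t, (E s : ℂ))) *
      Complex.exp (Complex.I * m * (deriv a t) * (x:ℂ)^2 / (2 * ℏ * a t)) *
      ((-(Complex.I / ℏ) * ((E t : ℝ) : ℂ) +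
          (Complex.I * m * (deriv (deriv a) t) * (x:ℂ)^2 * (2 * (ℏ:ℂ) * ((a t : ℝ) : ℂ)) -
            Complex.I * m * (deriv a t) * (x:ℂ)^2 * (2 * (ℏ:ℂ) * ((deriv a t : ℝ) : ℂ))) /
            (2 * (ℏ:ℂ) * ((a t : ℝ) : ℂ))^2) *
          ((Real.sqrt (2 / a t) : ℝ) : ℂ) * Complex.sin ((n : ℂ) * Real.pi * x / a t)
        + ((-(deriv a t) / (2 * a t) * Real.sqrt (2 / a t) : ℝ) : ℂ) *
          Complex.sin ((n : ℂ) * Real.pi * x / a t)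
        + ((Real.sqrt (2 / a t) : ℝ) : ℂ) *
          ((0 * ((a t : ℝ) : ℂ) - ((n:ℂ) * Real.pi * x) * ((deriv a t : ℝ) : ℂ)) / ((a t : ℝ) : ℂ)^2) *
          Complex.cos ((n : ℂ) * Real.pi * x / a t)) := by
    have hFt : (fun t' : ℝ => ψ t' x) = fun t' : ℝ =>
        Complex.exp (-(Complex.I / ℏ) * (∫ s in (0:ℝ)..t', (E s : ℂ))) *
        Complex.exp (Complex.I * m * (deriv a t') * (x:ℂ)^2 / (2 * ℏ * a t')) *
        (Real.sqrt (2 / a t') : ℂ) *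
        Complex.sin ((n : ℂ) * Real.pi * x / a t') := funext fun t' => hψ t' x
    rw [hFt]
    exact (aux_deriv_t (-(Complex.I / ℏ))
      (fun t' : ℝ => ∫ s in (0:ℝ)..t', ((E s : ℝ) : ℂ))
      (fun t' : ℝ => Complex.I * m * (deriv a t') * (x:ℂ)^2 / (2 * ℏ * ((a t' : ℝ) : ℂ)))
      (fun t' : ℝ => (n : ℂ) * Real.pi * x / ((a t' : ℝ) : ℂ))
      (fun t' : ℝ => Real.sqrt (2 / a t')) t _ _ _ _ hJ hu hw hr).deriv
  ------------------------------------------------------------------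
  -- put everything together
  ------------------------------------------------------------------
  rw [hdT, hd2, hψ t x, hE t, hk t]
  have eE : Complex.exp ((Complex.I * m * (deriv a t) / (2 * ℏ * a t)) * (x:ℂ)^2)
      = Complex.exp (Complex.I * m * (deriv a t) * (x:ℂ)^2 / (2 * ℏ * a t)) := by
    congr 1; ring
  have eS : Complex.sin (((n : ℂ) * Real.pi / a t) * (x:ℂ))
      = Complex.sin ((n : ℂ) * Real.pi * x / a t) := by congr 1; ring
  have eC : Complex.cos (((n : ℂ) * Real.pi / a t) * (x:ℂ))
      = Complex.cos ((n : ℂ) * Real.pi * x / a t) := by congr 1; ring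
  rw [eE, eS, eC]
  set r : ℝ := Real.sqrt (2 / a t) with hrdef
  push_cast
  have hI : (Complex.I)^2 = -1 := Complex.I_sq
  have hI3 : Complex.I ^ 3 = -Complex.I := by
    rw [pow_succ, Complex.I_sq]; ring
  have hI4 : Complex.I ^ 4 = 1 := by
    rw [show 4 = 2 + 2 from rfl, pow_add, Complex.I_sq]; ring
  have hd1ne : ((a t : ℝ) : ℂ)^4 * ((m : ℝ) : ℂ)^2 ≠ 0 :=
    mul_ne_zero (pow_ne_zero _ hA0) (pow_ne_zero _ hm0)
  have hd3ne : ((ℏ : ℝ) : ℂ)^4 * ((a t : ℝ) : ℂ)^7 * ((m : ℝ) : ℂ) ≠ 0 :=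
    mul_ne_zero (mul_ne_zero (pow_ne_zero _ hℏ0) (pow_ne_zero _ hA0)) hm0
  field_simp
  ring_nf
  rw [hI]
  ring
end

section
/- For every γ > 1, the time-optimal expansion time T_opt(γ) = arcsinh(√((γ²−1)/2)) + arcsin((1/γ)·√((γ²−1)/2)) satisfies T_opt(γ) < ln γ + 1 + π/4. -/
theorem min_time_upper_bound (γ : ℝ) (hγ : 1 < γ) :
    Real.arsinh (Real.sqrt ((γ^2 - 1) / 2)) +
      Real.arcsin ((1 / γ) * Real.sqrt ((γ^2 - 1) / 2)) <
    Real.log γ + 1 + Real.pi / 4 := by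
  have hγ0 : (0:ℝ) < γ := by linarith
  set s := Real.sqrt ((γ^2 - 1) / 2) with hs
  have hs0 : 0 ≤ s := Real.sqrt_nonneg _
  have hs2 : s^2 = (γ^2 - 1) / 2 := by
    rw [hs, Real.sq_sqrt]; nlinarith
  -- Part A: arsinh s < log γ + 1
  have hA : Real.arsinh s < Real.log γ + 1 := by
    rw [Real.arsinh]
    have h1 : Real.sqrt (1 + s^2) < γ := by
      have : 1 + s^2 < γ^2 := by nlinarith
      calc Real.sqrt (1 + s^2) < Real.sqrt (γ^2) := by
            apply Real.sqrt_lt_sqrt (by positivity) this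
        _ = γ := by rw [Real.sqrt_sq hγ0.le]
    have hsγ : s < γ := by nlinarith [Real.sq_sqrt (by nlinarith : (0:ℝ) ≤ (γ^2-1)/2)]
    have hpos : 0 < s + Real.sqrt (1 + s^2) := by
      have h' : Real.sqrt 1 ≤ Real.sqrt (1 + s^2) := Real.sqrt_le_sqrt (by nlinarith)
      simp only [Real.sqrt_one] at h'
      linarith
    have he : (2:ℝ) < Real.exp 1 := by
      have := Real.exp_one_gt_d9; linarith
    have hlt : s + Real.sqrt (1 + s^2) < Real.exp 1 * γ := by nlinarith
    calc Real.log (s + Real.sqrt (1 + s^2)) < Real.log (Real.exp 1 * γ) :=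
          Real.log_lt_log hpos hlt
      _ = Real.log γ + 1 := by
          rw [Real.log_mul (by positivity) (by positivity), Real.log_exp]; ring
  -- Part B: arcsin ((1/γ) * s) < π/4
  have hB : Real.arcsin ((1/γ) * s) < Real.pi / 4 := by
    set x := (1/γ) * s with hx
    have hx0 : 0 ≤ x := by positivity
    have hx2 : x^2 < 1/2 := by
      have : x^2 = s^2 / γ^2 := by rw [hx]; ring
      rw [this, hs2]
      rw [div_lt_iff₀ (by positivity)]
      nlinarith
    have h22 : (Real.sqrt 2 / 2)^2 = 1/2 := by
      rw [div_pow, Real.sq_sqrt (by norm_num : (0:ℝ) ≤ 2)]; norm_num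
    have hxlt : x < Real.sqrt 2 / 2 := by
      nlinarith [Real.sqrt_nonneg 2, Real.sq_sqrt (by norm_num : (0:ℝ) ≤ 2)]
    have harc : Real.arcsin (Real.sqrt 2 / 2) = Real.pi / 4 := by
      rw [show Real.sqrt 2 / 2 = Real.sin (Real.pi / 4) from (Real.sin_pi_div_four).symm]
      exact Real.arcsin_sin (by linarith [Real.pi_pos]) (by linarith [Real.pi_pos])
    calc Real.arcsin x < Real.arcsin (Real.sqrt 2 / 2) := by
          have h2lt : Real.sqrt 2 < 2 := by
            nlinarith [Real.sq_sqrt (by norm_num : (0:ℝ) ≤ 2), Real.sqrt_nonneg 2]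
          exact Real.strictMonoOn_arcsin ⟨by linarith, by linarith⟩
            ⟨by linarith [Real.sqrt_nonneg 2], by linarith⟩ hxlt
      _ = Real.pi / 4 := harc
  linarith
end
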